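/- Let α = (α_1, ..., α_m) ∈ (0, ∞)^m, m ≥ 2, and let μ_p = p! h_p(α) be the p-th moment of the Hirschman–Widder density Λ_α. Then the tuple α is determined up to permutation by the first m moments μ_1, ..., μ_m: there exist polynomial functions f_1, ..., f_m such that e_l(α) = f_l(μ_1, ..., μ_l) for each l, hence the polynomial F(t) = 1 + Σ_{l=1}^m f_l(μ_1,...,μ_l) t^l factors as Π_{j=1}^m (1 + α_j t). -/

import Mathlib

/-- The `l`-th complete homogeneous symmetric polynomial evaluated at the tuple `a`. -/
noncomputable def hsym {F : Type*} [CommSemiring F] {n : ℕ} (l : ℕ) (a : Fin n → F) : F :=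
  ∑ f ∈ Finset.univ.filter (fun f : Fin l → Fin n => ∀ i j : Fin l, i ≤ j → f i ≤ f j),
    ∏ i, a (f i)

/-- The `l`-th elementary symmetric polynomial evaluated at the tuple `a`. -/
noncomputable def esym {F : Type*} [CommSemiring F] {n : ℕ} (l : ℕ) (a : Fin n → F) : F :=
  ∑ s ∈ Finset.univ.powersetCard l, ∏ i ∈ s, a i

/-- The `p`-th moment `μ_p = p! h_p(α)` of the Hirschman–Widder density `Λ_α`. -/
noncomputable def hwMoment {m : ℕ} (α : Fin m → ℝ) (p : ℕ) : ℝ :=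
  (p.factorial : ℝ) * hsym p α

/-- The `l × l` Toeplitz matrix with `(i, j)` entry `μ_{i-j+1} / (i-j+1)!`
(1 on the superdiagonal, 0 above it). -/
noncomputable def momentToeplitz {m : ℕ} (α : Fin m → ℝ) (l : ℕ) :
    Matrix (Fin l) (Fin l) ℝ :=
  Matrix.of fun i j =>
    if (j : ℕ) ≤ (i : ℕ) + 1 then
      hwMoment α ((i : ℕ) + 1 - (j : ℕ)) / (((i : ℕ) + 1 - (j : ℕ)).factorial : ℝ)
    else 0

lemma hsym_zero {n : ℕ} (a : Fin n → ℝ) : hsym 0 a = 1 := by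
  rw [hsym, Finset.filter_true_of_mem (fun f _ => fun i _ _ => i.elim0)]
  simp

lemma hsym_nil {p : ℕ} (hp : p ≠ 0) (a : Fin 0 → ℝ) : hsym p a = 0 := by
  obtain ⟨q, rfl⟩ := Nat.exists_eq_succ_of_ne_zero hp
  have : IsEmpty (Fin (q+1) → Fin 0) := ⟨fun f => (f 0).elim0⟩
  rw [hsym, Finset.univ_eq_empty]
  simp

lemma esym_zero {n : ℕ} (a : Fin n → ℝ) : esym 0 a = 1 := by
  simp [esym]

lemma esym_eq_zero {n l : ℕ} (hl : n < l) (a : Fin n → ℝ) : esym l a = 0 := by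
  rw [esym, Finset.powersetCard_eq_empty.2 (by simpa using hl)]
  simp

private lemma mono_ne_last {n p : ℕ} {f : Fin (p+1) → Fin (n+1)}
    (hmono : ∀ i j : Fin (p+1), i ≤ j → f i ≤ f j) (hne : f (Fin.last p) ≠ Fin.last n)
    (k : Fin (p+1)) : f k ≠ Fin.last n := by
  have h1 : f k ≤ f (Fin.last p) := hmono _ _ (Fin.le_last k)
  have h2 : f (Fin.last p) < Fin.last n := lt_of_le_of_ne (Fin.le_last _) hne
  exact (lt_of_le_of_lt h1 h2).ne

lemma hsym_snoc {n : ℕ} (p : ℕ) (a : Fin n → ℝ) (x : ℝ) :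
    hsym (p+1) (Fin.snoc a x) = hsym (p+1) a + x * hsym p (Fin.snoc a x) := by
  classical
  rw [add_comm (hsym (p+1) a), hsym, ← Finset.sum_filter_add_sum_filter_not _
    (fun f : Fin (p+1) → Fin (n+1) => f (Fin.last p) = Fin.last n)]
  congr 1
  · -- case f last = last : equals x * hsym p (snoc a x)
    rw [hsym, Finset.mul_sum]
    refine Finset.sum_bij' (i := fun f _ => f ∘ Fin.castSucc)
      (j := fun g _ => Fin.snoc g (Fin.last n)) ?_ ?_ ?_ ?_ ?_
    · intro f hf
      simp only [Finset.mem_filter, Finset.mem_univ, true_and] at hf ⊢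
      intro i j hij
      exact hf.1 _ _ (Fin.castSucc_le_castSucc_iff.mpr hij)
    · intro g hg
      simp only [Finset.mem_filter, Finset.mem_univ, true_and] at hg ⊢
      refine ⟨fun i j hij => ?_, by simp⟩
      induction j using Fin.lastCases with
      | last => rw [Fin.snoc_last]; exact Fin.le_last _
      | cast j' =>
        induction i using Fin.lastCases with
        | last => exact absurd hij (not_le.mpr (Fin.castSucc_lt_last j'))
        | cast i' =>
          rw [Fin.snoc_castSucc, Fin.snoc_castSucc]
          exact hg _ _ (Fin.castSucc_le_castSucc_iff.mp hij)
    · intro f hf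
      simp only [Finset.mem_filter, Finset.mem_univ, true_and] at hf
      show Fin.snoc (f ∘ Fin.castSucc) (Fin.last n) = f
      funext k
      induction k using Fin.lastCases with
      | last => rw [Fin.snoc_last, hf.2]
      | cast k' => rw [Fin.snoc_castSucc]; rfl
    · intro g _
      show (Fin.snoc g (Fin.last n)) ∘ Fin.castSucc = g
      funext k; rw [Function.comp_apply, Fin.snoc_castSucc]
    · intro f hf
      simp only [Finset.mem_filter, Finset.mem_univ, true_and] at hf
      have hrw := Fin.prod_univ_castSucc (M := ℝ)
        (f := fun i : Fin (p+1) => Fin.snoc (α := fun _ => ℝ) a x (f i))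
      rw [hrw, hf.2, Fin.snoc_last, mul_comm]
      rfl
  · -- case f last ≠ last : equals hsym (p+1) a
    rw [hsym]
    refine Finset.sum_bij'
      (i := fun f hf => fun k => (f k).castPred
        (mono_ne_last (Finset.mem_filter.mp (Finset.mem_filter.mp hf).1).2
          (Finset.mem_filter.mp hf).2 k))
      (j := fun g _ => Fin.castSucc ∘ g) ?_ ?_ ?_ ?_ ?_
    · intro f hf
      simp only [Finset.mem_filter, Finset.mem_univ, true_and] at hf ⊢
      intro i j hij
      exact Fin.castPred_le_castPred_iff.mpr (hf.1 _ _ hij)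
    · intro g hg
      simp only [Finset.mem_filter, Finset.mem_univ, true_and] at hg ⊢
      constructor
      · intro i j hij
        exact Fin.castSucc_le_castSucc_iff.mpr (hg _ _ hij)
      · exact (Fin.castSucc_lt_last _).ne
    · intro f hf
      show Fin.castSucc ∘ _ = f
      funext k; simp [Fin.castSucc_castPred]
    · intro g hg
      funext k; simp
    · intro f hf
      refine Finset.prod_congr rfl (fun k _ => ?_)
      conv_lhs => rw [← Fin.castSucc_castPred (f k)
        (mono_ne_last (Finset.mem_filter.mp (Finset.mem_filter.mp hf).1).2
          (Finset.mem_filter.mp hf).2 k), Fin.snoc_castSucc]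

open PowerSeries in
noncomputable def hgf {n : ℕ} (a : Fin n → ℝ) : PowerSeries ℝ := PowerSeries.mk fun p => hsym p a

open PowerSeries in
lemma key_snoc {n : ℕ} (a : Fin n → ℝ) (x : ℝ) :
    (1 - C x * X) * hgf (Fin.snoc a x) = hgf a := by
  ext p
  rw [sub_mul, one_mul, map_sub]
  cases p with
  | zero =>
    simp [hgf, hsym_zero, PowerSeries.coeff_mk]
  | succ p =>
    rw [mul_assoc, PowerSeries.coeff_C_mul, PowerSeries.coeff_succ_X_mul]
    simp only [hgf, PowerSeries.coeff_mk]
    rw [hsym_snoc]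
    ring

open PowerSeries in
lemma prod_mul_hgf : ∀ (n : ℕ) (a : Fin n → ℝ),
    (∏ j, (1 - C (a j) * X)) * hgf a = 1 := by
  intro n
  induction n with
  | zero =>
    intro a
    rw [Finset.univ_eq_empty, Finset.prod_empty, one_mul]
    ext p
    cases p with
    | zero => simp [hgf, hsym_zero]
    | succ p => simp [hgf, hsym_nil]
  | succ n ih =>
    intro a
    have ha : a = Fin.snoc (Fin.init a) (a (Fin.last n)) := (Fin.snoc_init_self a).symm
    rw [Fin.prod_univ_castSucc (f := fun j => 1 - C (a j) * X)]
    rw [mul_assoc]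
    conv_lhs => rw [ha]
    simp only [Fin.snoc_last, Fin.snoc_castSucc]
    rw [key_snoc (Fin.init a) (a (Fin.last n))]
    exact ih (Fin.init a)

lemma coeff_prod_esym {n : ℕ} (a : Fin n → ℝ) (k : ℕ) :
    PowerSeries.coeff k (∏ j, (1 - PowerSeries.C (a j) * PowerSeries.X))
      = (-1)^k * esym k a := by
  classical
  have h1 : ∀ j : Fin n, (1 - PowerSeries.C (a j) * PowerSeries.X)
      = PowerSeries.C (-a j) * PowerSeries.X + 1 := by
    intro j; rw [map_neg]; ring
  simp only [h1]
  rw [Finset.prod_add]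
  rw [map_sum]
  have h2 : ∀ s ∈ (Finset.univ : Finset (Fin n)).powerset,
      PowerSeries.coeff k ((∏ j ∈ s, PowerSeries.C (-a j) * PowerSeries.X)
        * ∏ j ∈ Finset.univ \ s, (1:PowerSeries ℝ))
      = if s.card = k then ∏ j ∈ s, (-a j) else 0 := by
    intro s _
    rw [Finset.prod_const_one, mul_one, Finset.prod_mul_distrib, ← map_prod,
      Finset.prod_const, PowerSeries.coeff_C_mul, PowerSeries.coeff_X_pow]
    by_cases h : k = s.card
    · rw [if_pos h, mul_one, if_pos h.symm]
    · rw [if_neg h, mul_zero, if_neg (fun hh => h hh.symm)]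
  rw [Finset.sum_congr rfl h2, ← Finset.sum_filter, ← Finset.powersetCard_eq_filter,
    esym, Finset.mul_sum]
  refine Finset.sum_congr rfl fun s hs => ?_
  have hc : s.card = k := (Finset.mem_powersetCard.mp hs).2
  calc ∏ j ∈ s, -a j = ∏ j ∈ s, (-1) * a j := by simp
    _ = (-1)^k * ∏ j ∈ s, a j := by rw [Finset.prod_mul_distrib, Finset.prod_const, hc]

lemma newton_eh {n : ℕ} (a : Fin n → ℝ) (l : ℕ) (hl : l ≠ 0) :
    ∑ k ∈ Finset.range (l+1), (-1:ℝ)^k * esym k a * hsym (l-k) a = 0 := by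
  have h2 := congrArg (PowerSeries.coeff l) (prod_mul_hgf n a)
  rw [PowerSeries.coeff_mul, Finset.Nat.sum_antidiagonal_eq_sum_range_succ_mk] at h2
  simp only [coeff_prod_esym, hgf, PowerSeries.coeff_mk] at h2
  rw [PowerSeries.coeff_one, if_neg hl] at h2
  simpa [mul_assoc] using h2

lemma prod_one_add {n : ℕ} (a : Fin n → ℝ) (t : ℝ) :
    ∏ j, (1 + a j * t) = ∑ l ∈ Finset.range (n+1), esym l a * t^l := by
  classical
  have h1 : ∀ j : Fin n, (1 + a j * t) = a j * t + 1 := fun j => add_comm _ _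
  simp only [h1]
  rw [Finset.prod_add]
  have h2 : ∀ s ∈ (Finset.univ : Finset (Fin n)).powerset,
      (∏ j ∈ s, a j * t) * ∏ j ∈ Finset.univ \ s, (1:ℝ)
        = (∏ j ∈ s, a j) * t ^ s.card := by
    intro s _
    rw [Finset.prod_const_one, mul_one, Finset.prod_mul_distrib, Finset.prod_const]
  rw [Finset.sum_congr rfl h2, Finset.powerset_card_biUnion, Finset.sum_biUnion]
  · rw [Finset.card_univ, Fintype.card_fin]
    refine Finset.sum_congr rfl fun l _ => ?_
    rw [esym, Finset.sum_mul]
    refine Finset.sum_congr rfl fun s hs => ?_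
    rw [(Finset.mem_powersetCard.mp hs).2]
  · intro i _ j _ hij
    exact Finset.pairwise_disjoint_powersetCard _ hij

noncomputable def hT {m : ℕ} (α : Fin m → ℝ) (l : ℕ) : Matrix (Fin l) (Fin l) ℝ :=
  Matrix.of fun i j => if (j:ℕ) ≤ (i:ℕ)+1 then hsym ((i:ℕ)+1-(j:ℕ)) α else 0

lemma coe_succAbove {l : ℕ} (j : Fin (l+1)) (c : Fin l) :
    ((j.succAbove c : Fin (l+1)) : ℕ) = if (c:ℕ) < (j:ℕ) then (c:ℕ) else (c:ℕ)+1 := by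
  rcases lt_or_ge ((c:ℕ)) ((j:ℕ)) with h | h
  · rw [if_pos h, Fin.succAbove_of_castSucc_lt _ _ (by rwa [Fin.lt_def])]
    rfl
  · rw [if_neg (not_lt.mpr h), Fin.succAbove_of_le_castSucc _ _ (by rwa [Fin.le_def])]
    rfl

lemma det_minor {m : ℕ} (α : Fin m → ℝ) (l : ℕ) (j : Fin (l+1)) :
    ((hT α (l+1)).submatrix Fin.castSucc j.succAbove).det = (hT α (j:ℕ)).det := by
  classical
  have hj : (j:ℕ) ≤ l := Fin.is_le j
  set A := (hT α (l+1)).submatrix Fin.castSucc j.succAbove with hA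
  let e2 : Fin (j:ℕ) ⊕ Fin (l - (j:ℕ)) ≃ Fin l :=
    finSumFinEquiv.trans (finCongr (by omega))
  have hvl : ∀ r : Fin (j:ℕ), ((e2 (Sum.inl r) : Fin l) : ℕ) = (r:ℕ) := by
    intro r; simp [e2, finSumFinEquiv_apply_left]
  have hvr : ∀ r : Fin (l - (j:ℕ)), ((e2 (Sum.inr r) : Fin l) : ℕ) = (j:ℕ) + (r:ℕ) := by
    intro r; simp [e2, finSumFinEquiv_apply_right]
  have hentry : ∀ (r c : Fin l),
      A r c = if ((j.succAbove c : Fin (l+1)) : ℕ) ≤ (r:ℕ)+1 then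
        hsym ((r:ℕ)+1-((j.succAbove c : Fin (l+1)) : ℕ)) α else 0 := by
    intro r c
    simp [hA, hT, Matrix.submatrix_apply]
  rw [← Matrix.det_submatrix_equiv_self e2 A,
    ← Matrix.fromBlocks_toBlocks (A.submatrix e2 e2)]
  have hB12 : (A.submatrix (e2 : _ → Fin l) e2).toBlocks₁₂ = 0 := by
    ext r c
    simp only [Matrix.toBlocks₁₂, Matrix.submatrix_apply, Matrix.of_apply, Matrix.zero_apply]
    rw [hentry, coe_succAbove]
    rw [hvl, hvr]
    have h1 : ¬ ((j:ℕ) + (c:ℕ) < (j:ℕ)) := by omega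
    rw [if_neg h1, if_neg (by have := r.2; omega)]
  have hB11 : (A.submatrix (e2 : _ → Fin l) e2).toBlocks₁₁ = hT α (j:ℕ) := by
    ext r c
    simp only [Matrix.toBlocks₁₁, Matrix.submatrix_apply, Matrix.of_apply]
    rw [hentry, coe_succAbove, hvl, hvl, if_pos c.2, hT]
    simp
  have hB22 : (A.submatrix (e2 : _ → Fin l) e2).toBlocks₂₂.det = 1 := by
    have htri : ((A.submatrix (e2 : _ → Fin l) e2).toBlocks₂₂).BlockTriangular OrderDual.toDual := by
      intro r c hrc
      have hrc' : (r:ℕ) < (c:ℕ) := hrc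
      simp only [Matrix.toBlocks₂₂, Matrix.submatrix_apply, Matrix.of_apply]
      rw [hentry, coe_succAbove, hvr, hvr]
      rw [if_neg (show ¬ ((j:ℕ) + (c:ℕ) < (j:ℕ)) by omega),
        if_neg (show ¬ ((j:ℕ)+(c:ℕ)+1 ≤ (j:ℕ)+(r:ℕ)+1) by omega)]
    rw [Matrix.det_of_lowerTriangular _ htri]
    refine Finset.prod_eq_one fun r _ => ?_
    simp only [Matrix.toBlocks₂₂, Matrix.submatrix_apply, Matrix.of_apply]
    rw [hentry, coe_succAbove, hvr,
      if_neg (show ¬ ((j:ℕ) + (r:ℕ) < (j:ℕ)) by omega),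
      if_pos (show (j:ℕ)+(r:ℕ)+1 ≤ (j:ℕ)+(r:ℕ)+1 from le_refl _),
      show (j:ℕ)+(r:ℕ)+1 - ((j:ℕ)+(r:ℕ)+1) = 0 by omega, hsym_zero]
  rw [hB12, hB11, Matrix.det_fromBlocks_zero₁₂, hB22, mul_one]

lemma det_hT_succ {m : ℕ} (α : Fin m → ℝ) (l : ℕ) :
    (hT α (l+1)).det
      = ∑ j : Fin (l+1), (-1:ℝ)^(l+(j:ℕ)) * hsym (l+1-(j:ℕ)) α * (hT α (j:ℕ)).det := by
  rw [Matrix.det_succ_row _ (Fin.last l)]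
  refine Finset.sum_congr rfl fun j _ => ?_
  have h1 : (hT α (l+1)).submatrix (Fin.last l).succAbove j.succAbove
      = (hT α (l+1)).submatrix Fin.castSucc j.succAbove := by
    rw [Fin.succAbove_last]
  rw [h1, det_minor]
  have h2 : hT α (l+1) (Fin.last l) j = hsym (l+1-(j:ℕ)) α := by
    simp only [hT, Matrix.of_apply, Fin.val_last]
    rw [if_pos (by have := Fin.is_le j; omega)]
  rw [h2, Fin.val_last]

lemma det_hT {m : ℕ} (α : Fin m → ℝ) : ∀ l : ℕ, (hT α l).det = esym l α := by
  intro l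
  induction l using Nat.strong_induction_on with
  | _ l ih =>
    match l with
    | 0 =>
      rw [esym_zero]
      exact Matrix.det_fin_zero
    | (l+1) =>
      rw [det_hT_succ]
      have hsum : ∀ j : Fin (l+1), (-1:ℝ)^(l+(j:ℕ)) * hsym (l+1-(j:ℕ)) α * (hT α (j:ℕ)).det
          = (-1:ℝ)^l * ((-1:ℝ)^(j:ℕ) * esym (j:ℕ) α * hsym (l+1-(j:ℕ)) α) := by
        intro j
        rw [ih _ (by have := Fin.is_le j; omega), pow_add]
        ring
      rw [Finset.sum_congr rfl (fun j _ => hsum j), ← Finset.mul_sum,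
        Fin.sum_univ_eq_sum_range (fun k => (-1:ℝ)^k * esym k α * hsym (l+1-k) α)]
      have hnewt := newton_eh α (l+1) (Nat.succ_ne_zero l)
      rw [Finset.sum_range_succ] at hnewt
      have h0 : (l+1) - (l+1) = 0 := by omega
      rw [h0, hsym_zero, mul_one] at hnewt
      have : ∑ k ∈ Finset.range (l+1), (-1:ℝ)^k * esym k α * hsym (l+1-k) α
          = -((-1:ℝ)^(l+1) * esym (l+1) α) := by linarith
      rw [this]
      have : (-1:ℝ)^l * -((-1:ℝ)^(l+1) * esym (l+1) α)
          = ((-1:ℝ)^l * (-1:ℝ)^l) * esym (l+1) α := by ring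
      rw [this, ← mul_pow]
      norm_num


lemma momentToeplitz_eq_hT {m : ℕ} (α : Fin m → ℝ) (l : ℕ) :
    momentToeplitz α l = hT α l := by
  ext i j
  simp only [momentToeplitz, hT, hwMoment, Matrix.of_apply]
  split_ifs with h
  · rw [mul_comm, mul_div_assoc, div_self (by
      exact_mod_cast (Nat.factorial_ne_zero _)), mul_one]
  · rfl

theorem stmt15 (m : ℕ) (hm : 2 ≤ m) (α : Fin m → ℝ) (hα : ∀ j, 0 < α j) :
    (∀ l : ℕ, 1 ≤ l → l ≤ m → esym l α = (momentToeplitz α l).det) ∧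
    ∀ t : ℝ, 1 + ∑ l ∈ Finset.Icc 1 m, (momentToeplitz α l).det * t ^ l =
      ∏ j : Fin m, (1 + α j * t) := by
  have hdet : ∀ l : ℕ, (momentToeplitz α l).det = esym l α := by
    intro l; rw [momentToeplitz_eq_hT, det_hT]
  constructor
  · intro l _ _; rw [hdet]
  · intro t
    have hins : Finset.range (m+1) = insert 0 (Finset.Icc 1 m) := by
      ext k
      simp only [Finset.mem_range, Finset.mem_insert, Finset.mem_Icc]
      omega
    rw [prod_one_add α t, hins, Finset.sum_insert (by simp), esym_zero, pow_zero, one_mul]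
    congr 1
    refine Finset.sum_congr rfl fun l _ => ?_
    rw [hdet]
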